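/- arXiv:1710.08265 — 5 statements merged into one kernel-verified Lean document; each statement's English description precedes it below -/
import Mathlib

section
/- A 6-cycle C = (x1,x2,x3,x4,x5,x6) has exactly three inside 6-cycles: (x1,x3,x5,x2,x6,x4), (x1,x3,x6,x4,x2,x5), and (x1,x4,x2,x6,x3,x5) (as undirected cycles, up to rotation and reflection). -/
open Finset

/-- The edge set of the closed walk visiting `f 0, f 1, ..., f (m-1)` and back to `f 0`. -/
def cycleEdges {V : Type*} [DecidableEq V] (m : ℕ) (f : ℕ → V) : Finset (Sym2 V) :=
  (Finset.range m).image (fun i => s(f i, f ((i + 1) % m)))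

/-- `f` describes an `m`-cycle: its first `m` values are pairwise distinct. -/
def IsCycleMap {V : Type*} (m : ℕ) (f : ℕ → V) : Prop :=
  Set.InjOn f ↑(Finset.range m)

/-- Vertex set of the cycle described by `f`. -/
def cycleVerts {V : Type*} [DecidableEq V] (m : ℕ) (f : ℕ → V) : Finset V :=
  (Finset.range m).image f

/-- `g` is an inside `m`-cycle of `f`: same vertex set and edge-disjoint. -/
def IsInsideOf {V : Type*} [DecidableEq V] (m : ℕ) (g f : ℕ → V) : Prop :=
  IsCycleMap m g ∧ cycleVerts m g = cycleVerts m f ∧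
    Disjoint (cycleEdges m f) (cycleEdges m g)

/-- Edge set of the complete graph on `V`. -/
def kEdges (V : Type*) [Fintype V] [DecidableEq V] : Finset (Sym2 V) :=
  Finset.univ.filter (fun e => ¬ e.IsDiag)

/-- Edge set of the complete bipartite graph `K_{r,s}`. -/
def bipEdges (r s : ℕ) : Finset (Sym2 (Fin r ⊕ Fin s)) :=
  (Finset.univ : Finset (Fin r × Fin s)).image (fun p => s(Sum.inl p.1, Sum.inr p.2))

/-- `E` admits an almost 2-perfect 8-cycle decomposition. -/
def HasA2PDecomp {V : Type*} [DecidableEq V] (E : Finset (Sym2 V)) : Prop :=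
  ∃ (k : ℕ) (c c' : Fin k → ℕ → V),
    (∀ i, IsCycleMap 8 (c i)) ∧
    (∀ i j, i ≠ j → Disjoint (cycleEdges 8 (c i)) (cycleEdges 8 (c j))) ∧
    Finset.univ.sup (fun i => cycleEdges 8 (c i)) = E ∧
    (∀ i, IsInsideOf 8 (c' i) (c i)) ∧
    (∀ i j, i ≠ j → Disjoint (cycleEdges 8 (c' i)) (cycleEdges 8 (c' j))) ∧
    Finset.univ.sup (fun i => cycleEdges 8 (c' i)) = E

/-- `E` admits an almost 2-perfect 8-cycle packing with leave `L`. -/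
def HasA2PPacking {V : Type*} [DecidableEq V] (E L : Finset (Sym2 V)) : Prop :=
  L ⊆ E ∧ ∃ (k : ℕ) (c c' : Fin k → ℕ → V),
    (∀ i, IsCycleMap 8 (c i)) ∧
    (∀ i j, i ≠ j → Disjoint (cycleEdges 8 (c i)) (cycleEdges 8 (c j))) ∧
    Finset.univ.sup (fun i => cycleEdges 8 (c i)) = E \ L ∧
    (∀ i, IsInsideOf 8 (c' i) (c i)) ∧
    (∀ i j, i ≠ j → Disjoint (cycleEdges 8 (c' i)) (cycleEdges 8 (c' j))) ∧
    Finset.univ.sup (fun i => cycleEdges 8 (c' i)) = E \ L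

/-- A 1-factor (perfect matching) as a set of edges. -/
def IsOneFactor {V : Type*} (L : Finset (Sym2 V)) : Prop :=
  (∀ e ∈ L, ¬ e.IsDiag) ∧ ∀ v : V, ∃! e, e ∈ L ∧ v ∈ e

section Aux
variable {V : Type*} [DecidableEq V]

lemma mem_cycleEdges6 {e : ℕ → V} {x : Sym2 V} :
    x ∈ cycleEdges 6 e ↔ ∃ i < 6, s(e i, e ((i+1)%6)) = x := by
  simp [cycleEdges]

lemma cycleEdges_congr6 {e1 e2 : ℕ → V} (h : ∀ i < 6, e1 i = e2 i) :
    cycleEdges 6 e1 = cycleEdges 6 e2 := by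
  unfold cycleEdges
  apply Finset.image_congr
  intro i hi
  simp only [Finset.coe_range, Set.mem_Iio] at hi
  simp only []
  rw [h i hi, h ((i+1)%6) (by omega)]

lemma cycleEdges_comp6 (f : ℕ → V) (e : ℕ → ℕ) :
    cycleEdges 6 (fun i => f (e i)) = (cycleEdges 6 e).image (Sym2.map f) := by
  unfold cycleEdges
  rw [Finset.image_image]
  apply Finset.image_congr
  intro i _
  simp [Sym2.map_pair_eq]

lemma cycleEdges_rot_subset (h : ℕ → V) (k : ℕ) :
    cycleEdges 6 (fun i => h ((i+k)%6)) ⊆ cycleEdges 6 h := by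
  intro x hx
  rw [mem_cycleEdges6] at hx ⊢
  obtain ⟨i, hi, rfl⟩ := hx
  refine ⟨(i+k)%6, by omega, ?_⟩
  have : ((i+k)%6+1)%6 = ((i+1)%6+k)%6 := by omega
  rw [this]

lemma cycleEdges_rot (h : ℕ → V) (k : ℕ) :
    cycleEdges 6 (fun i => h ((i+k)%6)) = cycleEdges 6 h := by
  refine subset_antisymm (cycleEdges_rot_subset h k) ?_
  have h2 : cycleEdges 6 h = cycleEdges 6 (fun i => h ((((i + (6 - k%6))%6) + k)%6)) := by
    apply cycleEdges_congr6
    intro i hi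
    have : (((i + (6 - k%6))%6) + k)%6 = i := by omega
    rw [this]
  rw [h2]
  exact cycleEdges_rot_subset (fun i => h ((i+k)%6)) (6 - k%6)

variable {f : ℕ → V}

lemma sym2_map_eq_iff (hf : Set.InjOn f ↑(Finset.range 6))
    {a b c d : ℕ} (ha : a < 6) (hb : b < 6) (hc : c < 6) (hd : d < 6) :
    s(f a, f b) = s(f c, f d) ↔ s(a,b) = s(c,d) := by
  have m : ∀ {x : ℕ}, x < 6 → x ∈ (↑(Finset.range 6) : Set ℕ) := by
    intro x hx; simp [hx]
  rw [Sym2.eq_iff, Sym2.eq_iff]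
  constructor
  · rintro (⟨h1, h2⟩ | ⟨h1, h2⟩)
    · exact Or.inl ⟨hf (m ha) (m hc) h1, hf (m hb) (m hd) h2⟩
    · exact Or.inr ⟨hf (m ha) (m hd) h1, hf (m hb) (m hc) h2⟩
  · rintro (⟨rfl, rfl⟩ | ⟨rfl, rfl⟩) <;> simp

def Good (s : Finset (Sym2 ℕ)) : Prop := ∀ x ∈ s, ∀ a ∈ x, a < 6

lemma sym2_map_injOn (hf : Set.InjOn f ↑(Finset.range 6)) {x y : Sym2 ℕ}
    (hx : ∀ a ∈ x, a < 6) (hy : ∀ a ∈ y, a < 6)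
    (h : Sym2.map f x = Sym2.map f y) : x = y := by
  induction x using Sym2.ind with
  | _ a b =>
    induction y using Sym2.ind with
    | _ c d =>
      rw [Sym2.map_pair_eq, Sym2.map_pair_eq] at h
      exact (sym2_map_eq_iff hf (hx a (by simp)) (hx b (by simp))
        (hy c (by simp)) (hy d (by simp))).mp h

lemma image_eq_iff (hf : Set.InjOn f ↑(Finset.range 6)) {s t : Finset (Sym2 ℕ)}
    (hs : Good s) (ht : Good t) :
    s.image (Sym2.map f) = t.image (Sym2.map f) ↔ s = t := by
  constructor
  · intro h
    ext x
    constructor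
    · intro hx
      have : Sym2.map f x ∈ t.image (Sym2.map f) := by
        rw [← h]; exact Finset.mem_image_of_mem _ hx
      obtain ⟨y, hy, hxy⟩ := Finset.mem_image.mp this
      rwa [sym2_map_injOn hf (ht y hy) (hs x hx) hxy] at hy
    · intro hx
      have : Sym2.map f x ∈ s.image (Sym2.map f) := by
        rw [h]; exact Finset.mem_image_of_mem _ hx
      obtain ⟨y, hy, hxy⟩ := Finset.mem_image.mp this
      rwa [sym2_map_injOn hf (hs y hy) (ht x hx) hxy] at hy
  · rintro rfl; rfl

lemma disjoint_image_iff (hf : Set.InjOn f ↑(Finset.range 6)) {s t : Finset (Sym2 ℕ)}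
    (hs : Good s) (ht : Good t) :
    Disjoint (s.image (Sym2.map f)) (t.image (Sym2.map f)) ↔ Disjoint s t := by
  rw [Finset.disjoint_left, Finset.disjoint_left]
  constructor
  · intro h x hxs hxt
    exact h (Finset.mem_image_of_mem _ hxs) (Finset.mem_image_of_mem _ hxt)
  · intro h x hxs hxt
    obtain ⟨y, hy, hxy⟩ := Finset.mem_image.mp hxs
    obtain ⟨z, hz, hxz⟩ := Finset.mem_image.mp hxt
    have := sym2_map_injOn hf (hs y hy) (ht z hz) (hxy.trans hxz.symm)
    subst this
    exact h hy hz

lemma good_cycleEdges {e : ℕ → ℕ} (he : ∀ i < 6, e i < 6) : Good (cycleEdges 6 e) := by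
  intro x hx a ha
  rw [mem_cycleEdges6] at hx
  obtain ⟨i, hi, rfl⟩ := hx
  rw [Sym2.mem_iff] at ha
  rcases ha with rfl | rfl
  · exact he i hi
  · exact he _ (by omega)

end Aux

/-! ### ℕ-level boolean computations -/

def nf (l : List ℕ) : ℕ → ℕ := fun i => l.getD i 0

def EL (l : List ℕ) : Finset (Sym2 ℕ) := cycleEdges 6 (nf l)

def code (l : List ℕ) (i : ℕ) : ℕ :=
  min (nf l i) (nf l ((i+1)%6)) * 6 + max (nf l i) (nf l ((i+1)%6))

def eOf (l : List ℕ) : List ℕ := (List.range 6).map (code l)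

def disjB (l₁ l₂ : List ℕ) : Bool :=
  (eOf l₁).all fun x => (eOf l₂).all fun y => x ≠ y

def subB (l₁ l₂ : List ℕ) : Bool :=
  (eOf l₁).all fun x => (eOf l₂).any fun y => x = y

def sameB (l₁ l₂ : List ℕ) : Bool := subB l₁ l₂ && subB l₂ l₁

def ndB (l : List ℕ) : Bool := l.dedup == l

lemma code_eq_iff {l₁ l₂ : List ℕ} (h₁ : ∀ i, nf l₁ i < 6) (h₂ : ∀ i, nf l₂ i < 6)
    (i j : ℕ) :
    code l₁ i = code l₂ j ↔ s(nf l₁ i, nf l₁ ((i+1)%6)) = s(nf l₂ j, nf l₂ ((j+1)%6)) := by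
  rw [Sym2.eq_iff]
  unfold code
  have a1 := h₁ i; have a2 := h₁ ((i+1)%6); have a3 := h₂ j; have a4 := h₂ ((j+1)%6)
  constructor
  · intro h; omega
  · rintro (⟨e1, e2⟩ | ⟨e1, e2⟩) <;> omega

lemma disjB_iff {l₁ l₂ : List ℕ} (h₁ : ∀ i, nf l₁ i < 6) (h₂ : ∀ i, nf l₂ i < 6) :
    disjB l₁ l₂ = true ↔ Disjoint (EL l₁) (EL l₂) := by
  rw [Finset.disjoint_left]
  simp only [disjB, eOf, List.all_eq_true, List.mem_map, List.mem_range,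
    forall_exists_index, and_imp]
  constructor
  · intro h x hx₁ hx₂
    rw [EL, mem_cycleEdges6] at hx₁ hx₂
    obtain ⟨i, hi, rfl⟩ := hx₁
    obtain ⟨j, hj, hj'⟩ := hx₂
    have := h (code l₁ i) i hi rfl (code l₂ j) j hj rfl
    rw [decide_eq_true_iff] at this
    exact this ((code_eq_iff h₁ h₂ i j).mpr hj'.symm)
  · rintro h x i hi rfl y j hj rfl
    rw [decide_eq_true_iff]
    intro hc
    have hmem₁ : s(nf l₁ i, nf l₁ ((i+1)%6)) ∈ EL l₁ := by
      rw [EL, mem_cycleEdges6]; exact ⟨i, hi, rfl⟩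
    have hmem₂ : s(nf l₁ i, nf l₁ ((i+1)%6)) ∈ EL l₂ := by
      rw [EL, mem_cycleEdges6]
      exact ⟨j, hj, ((code_eq_iff h₁ h₂ i j).mp hc).symm⟩
    exact h hmem₁ hmem₂

lemma subB_iff {l₁ l₂ : List ℕ} (h₁ : ∀ i, nf l₁ i < 6) (h₂ : ∀ i, nf l₂ i < 6) :
    subB l₁ l₂ = true ↔ EL l₁ ⊆ EL l₂ := by
  simp only [subB, eOf, List.all_eq_true, List.any_eq_true, List.mem_map, List.mem_range,
    forall_exists_index, and_imp]
  constructor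
  · intro h x hx
    rw [EL, mem_cycleEdges6] at hx
    obtain ⟨i, hi, rfl⟩ := hx
    obtain ⟨y, ⟨j, hj, rfl⟩, hc⟩ := h (code l₁ i) i hi rfl
    rw [decide_eq_true_iff] at hc
    rw [EL, mem_cycleEdges6]
    exact ⟨j, hj, ((code_eq_iff h₁ h₂ i j).mp hc).symm⟩
  · rintro h x i hi rfl
    have hmem : s(nf l₁ i, nf l₁ ((i+1)%6)) ∈ EL l₂ := by
      apply h; rw [EL, mem_cycleEdges6]; exact ⟨i, hi, rfl⟩
    rw [EL, mem_cycleEdges6] at hmem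
    obtain ⟨j, hj, hj'⟩ := hmem
    exact ⟨code l₂ j, ⟨j, hj, rfl⟩, by
      rw [decide_eq_true_iff]; exact (code_eq_iff h₁ h₂ i j).mpr hj'.symm⟩

lemma sameB_iff {l₁ l₂ : List ℕ} (h₁ : ∀ i, nf l₁ i < 6) (h₂ : ∀ i, nf l₂ i < 6) :
    sameB l₁ l₂ = true ↔ EL l₁ = EL l₂ := by
  rw [sameB, Bool.and_eq_true, subB_iff h₁ h₂, subB_iff h₂ h₁]
  exact ⟨fun ⟨a, b⟩ => subset_antisymm a b, fun h => ⟨h.le, h.ge⟩⟩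

lemma ndB_of_nodup {l : List ℕ} (h : l.Nodup) : ndB l = true := by
  rw [ndB, List.dedup_eq_self.mpr h]; simp

lemma nf_lt {l : List ℕ} (h : ∀ x ∈ l, x < 6) (i : ℕ) : nf l i < 6 := by
  by_cases hi : i < l.length
  · rw [nf, List.getD_eq_getElem l 0 hi]
    exact h _ (List.getElem_mem hi)
  · rw [nf, List.getD_eq_default l 0 (by omega)]
    omega

def pat1 : List ℕ := [0,2,4,1,5,3]
def pat2 : List ℕ := [0,2,5,3,1,4]
def pat3 : List ℕ := [0,3,1,5,2,4]
def base6 : List ℕ := [0,1,2,3,4,5]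

def claimB : Bool :=
  (List.range 6).all fun b => (List.range 6).all fun c => (List.range 6).all fun d =>
  (List.range 6).all fun e => (List.range 6).all fun g =>
  !(ndB [0,b,c,d,e,g]) ||
    (disjB base6 [0,b,c,d,e,g] ==
      (sameB [0,b,c,d,e,g] pat1 || sameB [0,b,c,d,e,g] pat2 || sameB [0,b,c,d,e,g] pat3))

set_option maxRecDepth 40000 in
set_option maxHeartbeats 1000000 in
theorem claimB_true : claimB = true := by rfl

lemma patDisj : Disjoint (EL base6) (EL pat1) ∧ Disjoint (EL base6) (EL pat2) ∧
    Disjoint (EL base6) (EL pat3) := by decide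

lemma patNe : EL pat1 ≠ EL pat2 ∧ EL pat1 ≠ EL pat3 ∧ EL pat2 ≠ EL pat3 := by decide

lemma patImg : ((Finset.range 6).image (nf pat1) = Finset.range 6) ∧
    ((Finset.range 6).image (nf pat2) = Finset.range 6) ∧
    ((Finset.range 6).image (nf pat3) = Finset.range 6) := by decide

lemma patInj : (∀ i < 6, ∀ j < 6, nf pat1 i = nf pat1 j → i = j) ∧
    (∀ i < 6, ∀ j < 6, nf pat2 i = nf pat2 j → i = j) ∧
    (∀ i < 6, ∀ j < 6, nf pat3 i = nf pat3 j → i = j) := by decide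

lemma patLt : (∀ i, nf pat1 i < 6) ∧ (∀ i, nf pat2 i < 6) ∧ (∀ i, nf pat3 i < 6) ∧
    (∀ i, nf base6 i < 6) :=
  ⟨nf_lt (by decide), nf_lt (by decide), nf_lt (by decide), nf_lt (by decide)⟩

lemma baseGet : ∀ i < 6, nf base6 i = i := by decide

lemma claim_spec : ∀ b c d e g : ℕ, b < 6 → c < 6 → d < 6 → e < 6 → g < 6 →
    ([0,b,c,d,e,g] : List ℕ).Nodup →
    (disjB base6 [0,b,c,d,e,g] = true ↔
      (sameB [0,b,c,d,e,g] pat1 = true ∨ sameB [0,b,c,d,e,g] pat2 = true ∨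
       sameB [0,b,c,d,e,g] pat3 = true)) := by
  intro b c d e g hb hc hd he hg hnd
  have h := claimB_true
  simp only [claimB, List.all_eq_true, List.mem_range] at h
  have h2 := h b hb c hc d hd e he g hg
  rw [ndB_of_nodup hnd] at h2
  simp only [Bool.not_true, Bool.false_or, beq_iff_eq] at h2
  rw [h2]
  simp only [Bool.or_eq_true]
  tauto


/-- A 6-cycle has exactly three inside 6-cycles, the listed ones. -/
theorem six_cycle_three_insides {V : Type*} [DecidableEq V] (f : ℕ → V)
    (hf : IsCycleMap 6 f) :
    {E : Finset (Sym2 V) | ∃ g : ℕ → V, IsInsideOf 6 g f ∧ cycleEdges 6 g = E}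
        = {cycleEdges 6 (fun i => f (([0,2,4,1,5,3] : List ℕ).getD i 0)),
           cycleEdges 6 (fun i => f (([0,2,5,3,1,4] : List ℕ).getD i 0)),
           cycleEdges 6 (fun i => f (([0,3,1,5,2,4] : List ℕ).getD i 0))} ∧
    {E : Finset (Sym2 V) | ∃ g : ℕ → V, IsInsideOf 6 g f ∧ cycleEdges 6 g = E}.ncard = 3 := by
  have hf' : Set.InjOn f ↑(Finset.range 6) := hf
  -- edge sets of the three candidates
  have hcomp1 : cycleEdges 6 (fun i => f (([0,2,4,1,5,3] : List ℕ).getD i 0))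
      = (EL pat1).image (Sym2.map f) := cycleEdges_comp6 f (nf pat1)
  have hcomp2 : cycleEdges 6 (fun i => f (([0,2,5,3,1,4] : List ℕ).getD i 0))
      = (EL pat2).image (Sym2.map f) := cycleEdges_comp6 f (nf pat2)
  have hcomp3 : cycleEdges 6 (fun i => f (([0,3,1,5,2,4] : List ℕ).getD i 0))
      = (EL pat3).image (Sym2.map f) := cycleEdges_comp6 f (nf pat3)
  have g1 : Good (EL pat1) := good_cycleEdges (fun i _ => patLt.1 i)
  have g2 : Good (EL pat2) := good_cycleEdges (fun i _ => patLt.2.1 i)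
  have g3 : Good (EL pat3) := good_cycleEdges (fun i _ => patLt.2.2.1 i)
  have gb : Good (EL base6) := good_cycleEdges (fun i _ => patLt.2.2.2 i)
  have hf_eq : cycleEdges 6 f = (EL base6).image (Sym2.map f) := by
    have : cycleEdges 6 f = cycleEdges 6 (fun i => f (nf base6 i)) :=
      cycleEdges_congr6 (fun i hi => by rw [baseGet i hi])
    rw [this]; exact cycleEdges_comp6 f (nf base6)
  -- backward direction: each listed set is realized
  have hback : ∀ (p : List ℕ), (∀ i, nf p i < 6) →
      (∀ i < 6, ∀ j < 6, nf p i = nf p j → i = j) →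
      ((Finset.range 6).image (nf p) = Finset.range 6) →
      Disjoint (EL base6) (EL p) →
      IsInsideOf 6 (fun i => f (nf p i)) f := by
    intro p hlt hinj himg hd
    refine ⟨?_, ?_, ?_⟩
    · intro i hi j hj h
      simp only [Finset.coe_range, Set.mem_Iio] at hi hj
      have := hf' (by simp [hlt i]) (by simp [hlt j]) h
      exact hinj i hi j hj this
    · show (Finset.range 6).image (fun i => f (nf p i)) = (Finset.range 6).image f
      rw [show (fun i => f (nf p i)) = f ∘ nf p from rfl, ← Finset.image_image, himg]
    · rw [hf_eq, cycleEdges_comp6 f (nf p)]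
      exact (disjoint_image_iff hf' gb (good_cycleEdges (fun i _ => hlt i))).mpr hd
  have hmain : {E : Finset (Sym2 V) | ∃ g : ℕ → V, IsInsideOf 6 g f ∧ cycleEdges 6 g = E}
      = {cycleEdges 6 (fun i => f (([0,2,4,1,5,3] : List ℕ).getD i 0)),
         cycleEdges 6 (fun i => f (([0,2,5,3,1,4] : List ℕ).getD i 0)),
         cycleEdges 6 (fun i => f (([0,3,1,5,2,4] : List ℕ).getD i 0))} := by
    ext E
    simp only [Set.mem_setOf_eq, Set.mem_insert_iff, Set.mem_singleton_iff]
    constructor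
    · rintro ⟨g, ⟨hgc, hgv, hgd⟩, rfl⟩
      have hgc' : Set.InjOn g ↑(Finset.range 6) := hgc
      -- find index map e with f ∘ e = g on range 6
      have hex : ∀ i, i < 6 → ∃ j, j < 6 ∧ f j = g i := by
        intro i hi
        have : g i ∈ cycleVerts 6 f := by
          rw [← hgv]
          exact Finset.mem_image_of_mem g (Finset.mem_range.mpr hi)
        simp only [cycleVerts, Finset.mem_image, Finset.mem_range] at this
        obtain ⟨j, hj, hfj⟩ := this
        exact ⟨j, hj, hfj⟩
      choose e0 he0 hfe0 using hex
      set et : ℕ → ℕ := fun i => if h : i < 6 then e0 i h else 0 with htdef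
      have hetlt : ∀ i, et i < 6 := by
        intro i; rw [htdef]; dsimp only; split
        · exact he0 i ‹_›
        · omega
      have hfet : ∀ i < 6, f (et i) = g i := by
        intro i hi; rw [htdef]; dsimp only; rw [dif_pos hi]; exact hfe0 i hi
      -- surjectivity onto range 6
      have hsurj : ∀ j < 6, ∃ i, i < 6 ∧ et i = j := by
        intro j hj
        have : f j ∈ cycleVerts 6 g := by
          rw [hgv]
          exact Finset.mem_image_of_mem f (Finset.mem_range.mpr hj)
        simp only [cycleVerts, Finset.mem_image, Finset.mem_range] at this
        obtain ⟨i, hi, hgi⟩ := this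
        refine ⟨i, hi, ?_⟩
        have : f (et i) = f j := by rw [hfet i hi, hgi]
        exact hf' (by simp [hetlt i]) (by simp [hj]) this
      obtain ⟨k, hk, hek⟩ := hsurj 0 (by omega)
      set e2 : ℕ → ℕ := fun i => et ((i + k) % 6) with he2def
      have h2lt : ∀ i, e2 i < 6 := fun i => hetlt _
      have h20 : e2 0 = 0 := by
        rw [he2def]; dsimp only
        rw [Nat.zero_add, Nat.mod_eq_of_lt hk]; exact hek
      have h2inj : ∀ i < 6, ∀ j < 6, e2 i = e2 j → i = j := by
        intro i hi j hj h
        have hfij : g ((i + k) % 6) = g ((j + k) % 6) := by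
          rw [← hfet _ (by omega), ← hfet _ (by omega)]
          rw [he2def] at h; dsimp only at h; rw [h]
        have := hgc' (by simp; omega) (by simp; omega) hfij
        omega
      set L : List ℕ := [0, e2 1, e2 2, e2 3, e2 4, e2 5] with hLdef
      have hLget : ∀ i < 6, nf L i = e2 i := by
        intro i hi
        interval_cases i
        · simpa [nf, hLdef] using h20.symm
        all_goals simp [nf, hLdef]
      have hLlt : ∀ i, nf L i < 6 := by
        apply nf_lt
        intro x hx
        rw [hLdef] at hx
        simp only [List.mem_cons, List.not_mem_nil, or_false] at hx
        rcases hx with rfl | rfl | rfl | rfl | rfl | rfl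
        · omega
        all_goals exact h2lt _
      have hLnd : L.Nodup := by
        have hrange : (List.range 6) = [0, 1, 2, 3, 4, 5] := rfl
        have hLmap : L = (List.range 6).map e2 := by
          rw [hrange]
          simp only [List.map_cons, List.map_nil, hLdef, h20]
        rw [hLmap]
        refine List.Nodup.map_on ?_ List.nodup_range
        intro x hx y hy h
        rw [List.mem_range] at hx hy
        exact h2inj x hx y hy h
      -- edge set identities
      have hg_eq : cycleEdges 6 g = (EL L).image (Sym2.map f) := by
        have s1 : cycleEdges 6 g = cycleEdges 6 (fun i => f (et i)) :=
          cycleEdges_congr6 (fun i hi => (hfet i hi).symm)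
        have s2 : cycleEdges 6 (fun i => f (et i)) = (cycleEdges 6 et).image (Sym2.map f) :=
          cycleEdges_comp6 f et
        have s3 : cycleEdges 6 e2 = cycleEdges 6 et := cycleEdges_rot et k
        have s4 : cycleEdges 6 e2 = EL L :=
          cycleEdges_congr6 (fun i hi => (hLget i hi).symm)
        rw [s1, s2, ← s3, s4]
      have hdisjN : Disjoint (EL base6) (EL L) := by
        have := hgd
        rw [hf_eq, hg_eq] at this
        exact (disjoint_image_iff hf' gb (good_cycleEdges (fun i _ => hLlt i))).mp this
      have hdB : disjB base6 L = true := (disjB_iff patLt.2.2.2 hLlt).mpr hdisjN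
      have := (claim_spec (e2 1) (e2 2) (e2 3) (e2 4) (e2 5)
        (h2lt 1) (h2lt 2) (h2lt 3) (h2lt 4) (h2lt 5) hLnd).mp hdB
      rcases this with hs | hs | hs
      · left
        rw [hg_eq, hcomp1, (sameB_iff hLlt patLt.1).mp hs]
      · right; left
        rw [hg_eq, hcomp2, (sameB_iff hLlt patLt.2.1).mp hs]
      · right; right
        rw [hg_eq, hcomp3, (sameB_iff hLlt patLt.2.2.1).mp hs]
    · rintro (rfl | rfl | rfl)
      · exact ⟨fun i => f (nf pat1 i),
          hback pat1 patLt.1 patInj.1 patImg.1 patDisj.1, rfl⟩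
      · exact ⟨fun i => f (nf pat2 i),
          hback pat2 patLt.2.1 patInj.2.1 patImg.2.1 patDisj.2.1, rfl⟩
      · exact ⟨fun i => f (nf pat3 i),
          hback pat3 patLt.2.2.1 patInj.2.2 patImg.2.2 patDisj.2.2, rfl⟩
  refine ⟨hmain, ?_⟩
  rw [hmain]
  have d12 : cycleEdges 6 (fun i => f (([0,2,4,1,5,3] : List ℕ).getD i 0))
      ≠ cycleEdges 6 (fun i => f (([0,2,5,3,1,4] : List ℕ).getD i 0)) := by
    rw [hcomp1, hcomp2]
    intro h
    exact patNe.1 ((image_eq_iff hf' g1 g2).mp h)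
  have d13 : cycleEdges 6 (fun i => f (([0,2,4,1,5,3] : List ℕ).getD i 0))
      ≠ cycleEdges 6 (fun i => f (([0,3,1,5,2,4] : List ℕ).getD i 0)) := by
    rw [hcomp1, hcomp3]
    intro h
    exact patNe.2.1 ((image_eq_iff hf' g1 g3).mp h)
  have d23 : cycleEdges 6 (fun i => f (([0,2,5,3,1,4] : List ℕ).getD i 0))
      ≠ cycleEdges 6 (fun i => f (([0,3,1,5,2,4] : List ℕ).getD i 0)) := by
    rw [hcomp2, hcomp3]
    intro h
    exact patNe.2.2 ((image_eq_iff hf' g2 g3).mp h)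
  rw [Set.ncard_insert_of_notMem
    (by simp only [Set.mem_insert_iff, Set.mem_singleton_iff]; push_neg; exact ⟨d12, d13⟩)
    (Set.toFinite _),
    Set.ncard_pair d23]
end

section
/- The complete bipartite graph K_{4,4} admits an almost 2-perfect 8-cycle decomposition: with parts {x0,x1,x2,x3} and {y0,y1,y2,y3}, the cycles (x0,y0,x1,y1,x2,y2,x3,y3) and (x0,y2,x1,y3,x2,y0,x3,y1) partition the edges of K_{4,4}, and the cycles (x1,y2,x0,y1,x3,y0,x2,y3) and (x1,y1,x2,y2,x3,y3,x0,y0) also partition the edges of K_{4,4}, with each cycle of the second decomposition being an inside cycle of the corresponding cycle of the first (same vertex set and edge-disjoint from it). -/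
open Finset

lemma aux_inj {V : Type*} (m : ℕ) (f : ℕ → V)
    (h : ∀ a < m, ∀ b < m, f a = f b → a = b) : IsCycleMap m f := by
  intro a ha b hb hf
  exact h a (by simpa using ha) b (by simpa using hb) hf

/-- The explicit almost 2-perfect 8-cycle decomposition of `K_{4,4}`. -/
theorem a2p_K44 :
    IsCycleMap 8 (fun j => (([Sum.inl 0, Sum.inr 0, Sum.inl 1, Sum.inr 1, Sum.inl 2, Sum.inr 2, Sum.inl 3, Sum.inr 3] : List (Fin 4 ⊕ Fin 4)).getD j (Sum.inl 0))) ∧ IsCycleMap 8 (fun j => (([Sum.inl 0, Sum.inr 2, Sum.inl 1, Sum.inr 3, Sum.inl 2, Sum.inr 0, Sum.inl 3, Sum.inr 1] : List (Fin 4 ⊕ Fin 4)).getD j (Sum.inl 0))) ∧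
    Disjoint (cycleEdges 8 (fun j => (([Sum.inl 0, Sum.inr 0, Sum.inl 1, Sum.inr 1, Sum.inl 2, Sum.inr 2, Sum.inl 3, Sum.inr 3] : List (Fin 4 ⊕ Fin 4)).getD j (Sum.inl 0)))) (cycleEdges 8 (fun j => (([Sum.inl 0, Sum.inr 2, Sum.inl 1, Sum.inr 3, Sum.inl 2, Sum.inr 0, Sum.inl 3, Sum.inr 1] : List (Fin 4 ⊕ Fin 4)).getD j (Sum.inl 0)))) ∧
    cycleEdges 8 (fun j => (([Sum.inl 0, Sum.inr 0, Sum.inl 1, Sum.inr 1, Sum.inl 2, Sum.inr 2, Sum.inl 3, Sum.inr 3] : List (Fin 4 ⊕ Fin 4)).getD j (Sum.inl 0))) ∪ cycleEdges 8 (fun j => (([Sum.inl 0, Sum.inr 2, Sum.inl 1, Sum.inr 3, Sum.inl 2, Sum.inr 0, Sum.inl 3, Sum.inr 1] : List (Fin 4 ⊕ Fin 4)).getD j (Sum.inl 0))) = bipEdges 4 4 ∧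
    IsInsideOf 8 (fun j => (([Sum.inl 1, Sum.inr 2, Sum.inl 0, Sum.inr 1, Sum.inl 3, Sum.inr 0, Sum.inl 2, Sum.inr 3] : List (Fin 4 ⊕ Fin 4)).getD j (Sum.inl 0))) (fun j => (([Sum.inl 0, Sum.inr 0, Sum.inl 1, Sum.inr 1, Sum.inl 2, Sum.inr 2, Sum.inl 3, Sum.inr 3] : List (Fin 4 ⊕ Fin 4)).getD j (Sum.inl 0))) ∧ IsInsideOf 8 (fun j => (([Sum.inl 1, Sum.inr 1, Sum.inl 2, Sum.inr 2, Sum.inl 3, Sum.inr 3, Sum.inl 0, Sum.inr 0] : List (Fin 4 ⊕ Fin 4)).getD j (Sum.inl 0))) (fun j => (([Sum.inl 0, Sum.inr 2, Sum.inl 1, Sum.inr 3, Sum.inl 2, Sum.inr 0, Sum.inl 3, Sum.inr 1] : List (Fin 4 ⊕ Fin 4)).getD j (Sum.inl 0))) ∧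
    Disjoint (cycleEdges 8 (fun j => (([Sum.inl 1, Sum.inr 2, Sum.inl 0, Sum.inr 1, Sum.inl 3, Sum.inr 0, Sum.inl 2, Sum.inr 3] : List (Fin 4 ⊕ Fin 4)).getD j (Sum.inl 0)))) (cycleEdges 8 (fun j => (([Sum.inl 1, Sum.inr 1, Sum.inl 2, Sum.inr 2, Sum.inl 3, Sum.inr 3, Sum.inl 0, Sum.inr 0] : List (Fin 4 ⊕ Fin 4)).getD j (Sum.inl 0)))) ∧
    cycleEdges 8 (fun j => (([Sum.inl 1, Sum.inr 2, Sum.inl 0, Sum.inr 1, Sum.inl 3, Sum.inr 0, Sum.inl 2, Sum.inr 3] : List (Fin 4 ⊕ Fin 4)).getD j (Sum.inl 0))) ∪ cycleEdges 8 (fun j => (([Sum.inl 1, Sum.inr 1, Sum.inl 2, Sum.inr 2, Sum.inl 3, Sum.inr 3, Sum.inl 0, Sum.inr 0] : List (Fin 4 ⊕ Fin 4)).getD j (Sum.inl 0))) = bipEdges 4 4 := by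
  refine ⟨aux_inj _ _ (by decide), aux_inj _ _ (by decide), by decide, by decide,
    ⟨aux_inj _ _ (by decide), by decide, by decide⟩,
    ⟨aux_inj _ _ (by decide), by decide, by decide⟩, by decide, by decide⟩
end

section
/- For all positive integers t and s, the complete bipartite graph K_{4t,4s} admits an almost 2-perfect 8-cycle decomposition. -/
open Finset

namespace A2P

/-- The two edge-disjoint Hamiltonian 8-cycles of `K_{4,4}` on `Fin 4 ⊕ Fin 4`. -/
def base : Fin 2 → ℕ → (Fin 4 ⊕ Fin 4)
  | 0, n => [Sum.inl 0, Sum.inr 0, Sum.inl 1, Sum.inr 1, Sum.inl 2, Sum.inr 2,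
      Sum.inl 3, Sum.inr 3].getD (n % 8) (Sum.inl 0)
  | 1, n => [Sum.inl 0, Sum.inr 2, Sum.inl 1, Sum.inr 3, Sum.inl 2, Sum.inr 0,
      Sum.inl 3, Sum.inr 1].getD (n % 8) (Sum.inl 0)

def edges4 : Finset (Sym2 (Fin 4 ⊕ Fin 4)) :=
  (Finset.univ : Finset (Fin 4 × Fin 4)).image fun p => s(Sum.inl p.1, Sum.inr p.2)

lemma base_inj : ∀ ε : Fin 2, ∀ i ∈ range 8, ∀ j ∈ range 8, base ε i = base ε j → i = j := by
  decide

lemma base_disj : ∀ ε ε' : Fin 2, ε ≠ ε' →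
    cycleEdges 8 (base ε) ∩ cycleEdges 8 (base ε') = ∅ := by decide

lemma base_union : ∀ ε ε' : Fin 2, ε ≠ ε' →
    cycleEdges 8 (base ε) ∪ cycleEdges 8 (base ε') = edges4 := by decide

lemma base_verts : ∀ ε ε' : Fin 2, cycleVerts 8 (base ε) = cycleVerts 8 (base ε') := by decide

lemma base_sub : ∀ ε : Fin 2, cycleEdges 8 (base ε) ⊆ edges4 := by decide

lemma isCycleMap_iff {V : Type*} (m : ℕ) (f : ℕ → V) :
    IsCycleMap m f ↔ ∀ i ∈ range m, ∀ j ∈ range m, f i = f j → i = j := by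
  unfold IsCycleMap
  constructor
  · intro h i hi j hj hf; exact h (by simpa using hi) (by simpa using hj) hf
  · intro h i hi j hj hf; exact h i (by simpa using hi) j (by simpa using hj) hf

lemma cycleEdges_comp {V W : Type*} [DecidableEq V] [DecidableEq W] (v : V → W)
    (m : ℕ) (f : ℕ → V) :
    cycleEdges m (v ∘ f) = (cycleEdges m f).image (Sym2.map v) := by
  unfold cycleEdges
  rw [Finset.image_image]
  apply Finset.image_congr
  intro i _
  simp [Sym2.map_pair_eq]

lemma cycleVerts_comp {V W : Type*} [DecidableEq V] [DecidableEq W] (v : V → W)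
    (m : ℕ) (f : ℕ → V) :
    cycleVerts m (v ∘ f) = (cycleVerts m f).image v := by
  unfold cycleVerts
  rw [Finset.image_image]

lemma isCycleMap_comp {V W : Type*} (v : V → W) (hv : Function.Injective v)
    {m : ℕ} {f : ℕ → V} (hf : IsCycleMap m f) : IsCycleMap m (v ∘ f) :=
  fun i hi j hj h => hf hi hj (hv h)

variable (t s : ℕ)

/-- Embed the `4`-block `(a,b)` of `K_{4t,4s}`. -/
def vmap (a : Fin t) (b : Fin s) : Fin 4 ⊕ Fin 4 → Fin (4 * t) ⊕ Fin (4 * s) :=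
  Sum.map (fun x => ⟨4 * a + x, by have := a.isLt; have := x.isLt; omega⟩)
          (fun y => ⟨4 * b + y, by have := b.isLt; have := y.isLt; omega⟩)

lemma vmap_inj (a : Fin t) (b : Fin s) : Function.Injective (vmap t s a b) := by
  intro u w h
  cases u with
  | inl x => cases w with
    | inl x' =>
        simp only [vmap, Sum.map_inl, Sum.inl.injEq, Fin.mk.injEq] at h
        exact congrArg Sum.inl (Fin.ext (by omega))
    | inr y' => simp [vmap] at h
  | inr y => cases w with
    | inl x' => simp [vmap] at h
    | inr y' =>
        simp only [vmap, Sum.map_inr, Sum.inr.injEq, Fin.mk.injEq] at h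
        exact congrArg Sum.inr (Fin.ext (by omega))

def blockE (a : Fin t) (b : Fin s) : Finset (Sym2 (Fin (4 * t) ⊕ Fin (4 * s))) :=
  edges4.image (Sym2.map (vmap t s a b))

lemma blockE_disj {a a' : Fin t} {b b' : Fin s} (h : (a, b) ≠ (a', b')) :
    Disjoint (blockE t s a b) (blockE t s a' b') := by
  rw [Finset.disjoint_left]
  intro e he he'
  simp only [blockE, edges4, Finset.image_image, Finset.mem_image, Finset.mem_univ,
    true_and, Function.comp, Sym2.map_pair_eq, Prod.exists] at he he'
  obtain ⟨x, y, rfl⟩ := he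
  obtain ⟨x', y', heq⟩ := he'
  rw [Sym2.eq_iff] at heq
  rcases heq with ⟨h1, h2⟩ | ⟨h1, h2⟩
  · simp only [vmap, Sum.map_inl, Sum.map_inr, Sum.inl.injEq, Sum.inr.injEq,
      Fin.mk.injEq] at h1 h2
    have := x.isLt; have := x'.isLt; have := y.isLt; have := y'.isLt
    have ha : a = a' := Fin.ext (by omega)
    have hb : b = b' := Fin.ext (by omega)
    exact h (by rw [ha, hb])
  · simp [vmap] at h1
  
lemma blockE_sup :
    (Finset.univ : Finset (Fin t)).sup
      (fun a => (Finset.univ : Finset (Fin s)).sup (fun b => blockE t s a b)) =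
      bipEdges (4 * t) (4 * s) := by
  ext e
  simp only [Finset.mem_sup, Finset.mem_univ, true_and, blockE, edges4, Finset.image_image,
    Finset.mem_image, Function.comp, Sym2.map_pair_eq, Prod.exists, bipEdges]
  constructor
  · rintro ⟨a, b, x, y, rfl⟩
    exact ⟨_, _, rfl⟩
  · rintro ⟨u, w, rfl⟩
    have hu := u.isLt; have hw := w.isLt
    refine ⟨⟨u / 4, by omega⟩, ⟨w / 4, by omega⟩, ⟨u % 4, by omega⟩, ⟨w % 4, by omega⟩, ?_⟩
    have h1 : (⟨4 * (↑u / 4) + ↑u % 4, by omega⟩ : Fin (4 * t)) = u :=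
      Fin.ext (by simp only []; omega)
    have h2 : (⟨4 * (↑w / 4) + ↑w % 4, by omega⟩ : Fin (4 * s)) = w :=
      Fin.ext (by simp only []; omega)
    simp only [vmap, Sum.map_inl, Sum.map_inr]
    rw [show ((⟨4 * ↑(⟨↑u / 4, by omega⟩ : Fin t) + ↑(⟨↑u % 4, by omega⟩ : Fin 4), by
        have := (⟨↑u / 4, by omega⟩ : Fin t).isLt; omega⟩ : Fin (4 * t))) = u from h1]
    rw [show ((⟨4 * ↑(⟨↑w / 4, by omega⟩ : Fin s) + ↑(⟨↑w % 4, by omega⟩ : Fin 4), by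
        have := (⟨↑w / 4, by omega⟩ : Fin s).isLt; omega⟩ : Fin (4 * s))) = w from h2]

def Cyc (q : Fin t × Fin s × Fin 2) : ℕ → (Fin (4 * t) ⊕ Fin (4 * s)) :=
  vmap t s q.1 q.2.1 ∘ base q.2.2

lemma cyc_isCycleMap (q : Fin t × Fin s × Fin 2) : IsCycleMap 8 (Cyc t s q) :=
  isCycleMap_comp _ (vmap_inj t s q.1 q.2.1) ((isCycleMap_iff 8 _).2 (base_inj q.2.2))

lemma cyc_edges (q : Fin t × Fin s × Fin 2) :
    cycleEdges 8 (Cyc t s q) = (cycleEdges 8 (base q.2.2)).image (Sym2.map (vmap t s q.1 q.2.1)) :=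
  cycleEdges_comp _ 8 _

lemma cyc_disj {q q' : Fin t × Fin s × Fin 2} (h : q ≠ q') :
    Disjoint (cycleEdges 8 (Cyc t s q)) (cycleEdges 8 (Cyc t s q')) := by
  obtain ⟨a, b, ε⟩ := q
  obtain ⟨a', b', ε'⟩ := q'
  rw [cyc_edges, cyc_edges]
  by_cases hab : (a, b) = (a', b')
  · rw [Prod.mk.injEq] at hab
    obtain ⟨rfl, rfl⟩ := hab
    have hε : ε ≠ ε' := fun hh => h (by rw [hh])
    rw [Finset.disjoint_image (Sym2.map.injective (vmap_inj t s a b))]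
    rw [Finset.disjoint_iff_inter_eq_empty]
    exact base_disj ε ε' hε
  · refine (blockE_disj t s hab).mono ?_ ?_ <;>
      exact Finset.image_subset_image (base_sub _)

lemma cyc_pair_sup {a : Fin t} {b : Fin s} {ε ε' : Fin 2} (h : ε ≠ ε') :
    cycleEdges 8 (Cyc t s (a, b, ε)) ⊔ cycleEdges 8 (Cyc t s (a, b, ε')) = blockE t s a b := by
  rw [cyc_edges, cyc_edges]
  show _ ∪ _ = _
  rw [← Finset.image_union, base_union ε ε' h]
  rfl

end A2P

open A2P in
/-- `K_{4t,4s}` has an almost 2-perfect 8-cycle decomposition. -/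
theorem a2p_K4t4s (t s : ℕ) (ht : 0 < t) (hs : 0 < s) :
    HasA2PDecomp (bipEdges (4 * t) (4 * s)) := by
  classical
  let E : Fin t × Fin s × Fin 2 ≃ Fin (t * (s * 2)) :=
    (Equiv.prodCongr (Equiv.refl (Fin t)) finProdFinEquiv).trans finProdFinEquiv
  let sw : Fin t × Fin s × Fin 2 → Fin t × Fin s × Fin 2 := fun q => (q.1, q.2.1, q.2.2 + 1)
  have h21 : ∀ ε : Fin 2, ε + 1 + 1 = ε := by decide
  have hne2 : ∀ ε : Fin 2, ε + 1 ≠ ε := by decide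
  have hswsw : ∀ q, sw (sw q) = q := by
    rintro ⟨a, b, ε⟩
    show (a, b, ε + 1 + 1) = (a, b, ε)
    rw [h21]
  have hswne : ∀ q, sw q ≠ q := by
    rintro ⟨a, b, ε⟩ h
    rw [Prod.mk.injEq, Prod.mk.injEq] at h
    exact absurd h.2.2 (hne2 ε)
  have hswinj : Function.Injective sw := Function.LeftInverse.injective hswsw
  have hblock : ∀ (a : Fin t) (b : Fin s),
      (Finset.univ : Finset (Fin 2)).sup (fun ε => cycleEdges 8 (Cyc t s (a, b, ε))) =
        blockE t s a b := by
    intro a b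
    have h2 : (Finset.univ : Finset (Fin 2)) = {0, 1} := by decide
    rw [h2, Finset.sup_insert, Finset.sup_singleton]
    exact cyc_pair_sup t s (by decide)
  have hsupQ : (Finset.univ : Finset (Fin t × Fin s × Fin 2)).sup
      (fun q => cycleEdges 8 (Cyc t s q)) = bipEdges (4 * t) (4 * s) := by
    rw [← Finset.univ_product_univ, Finset.sup_product_left, ← blockE_sup t s]
    refine Finset.sup_congr rfl fun a _ => ?_
    rw [← Finset.univ_product_univ, Finset.sup_product_left]
    exact Finset.sup_congr rfl fun b _ => hblock a b
  have hsup : ∀ (φ : Fin (t * (s * 2)) → Fin t × Fin s × Fin 2), Function.Surjective φ →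
      Finset.univ.sup (fun i => cycleEdges 8 (Cyc t s (φ i))) = bipEdges (4 * t) (4 * s) := by
    intro φ hφ
    have himg : Finset.univ.image φ = (Finset.univ : Finset (Fin t × Fin s × Fin 2)) := by
      ext q
      simp only [Finset.mem_image, Finset.mem_univ, true_and, iff_true]
      exact hφ q
    calc Finset.univ.sup (fun i => cycleEdges 8 (Cyc t s (φ i)))
        = (Finset.univ.image φ).sup (fun q => cycleEdges 8 (Cyc t s q)) := by
          rw [Finset.sup_image]; rfl
      _ = bipEdges (4 * t) (4 * s) := by rw [himg, hsupQ]
  refine ⟨t * (s * 2), fun i => Cyc t s (E.symm i), fun i => Cyc t s (sw (E.symm i)),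
    ?_, ?_, ?_, ?_, ?_, ?_⟩
  · intro i; exact cyc_isCycleMap t s _
  · intro i j hij
    exact cyc_disj t s (fun h => hij (by simpa using congrArg E h))
  · exact hsup _ E.symm.surjective
  · intro i
    have hverts : ∀ q, cycleVerts 8 (Cyc t s (sw q)) = cycleVerts 8 (Cyc t s q) := by
      rintro ⟨a, b, ε⟩
      show cycleVerts 8 (vmap t s a b ∘ base (ε + 1)) = cycleVerts 8 (vmap t s a b ∘ base ε)
      rw [cycleVerts_comp, cycleVerts_comp, base_verts (ε + 1) ε]
    exact ⟨cyc_isCycleMap t s _, hverts _, cyc_disj t s (fun h => hswne _ h.symm)⟩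
  · intro i j hij
    exact cyc_disj t s (fun h => hij (by simpa using congrArg E (hswinj h)))
  · have hswsurj : Function.Surjective sw := fun q => ⟨sw q, hswsw q⟩
    exact hsup _ (hswsurj.comp E.symm.surjective)
end

section
/- For all positive integers t and s, the complete bipartite graph K_{4t,4s+2} admits an almost 2-perfect 8-cycle decomposition. -/
open Finset

lemma cycleEdges_comp {V W : Type*} [DecidableEq V] [DecidableEq W] (φ : V → W) (m : ℕ)
    (f : ℕ → V) : cycleEdges m (φ ∘ f) = (cycleEdges m f).image (Sym2.map φ) := by
  simp [cycleEdges, Finset.image_image, Function.comp_def, Sym2.map_pair_eq]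

lemma cycleVerts_comp {V W : Type*} [DecidableEq V] [DecidableEq W] (φ : V → W) (m : ℕ)
    (f : ℕ → V) : cycleVerts m (φ ∘ f) = (cycleVerts m f).image φ := by
  simp [cycleVerts, Finset.image_image]

lemma image_sup {ι V W : Type*} [DecidableEq V] [DecidableEq W] (s : Finset ι)
    (F : ι → Finset V) (g : V → W) :
    (s.sup F).image g = s.sup (fun i => (F i).image g) := by
  ext x
  simp only [Finset.mem_image, Finset.mem_sup]
  constructor
  · rintro ⟨v, ⟨i, hi, hv⟩, rfl⟩; exact ⟨i, hi, v, hv, rfl⟩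
  · rintro ⟨i, hi, v, hv, rfl⟩; exact ⟨v, ⟨i, hi, hv⟩, rfl⟩

lemma hasA2PDecomp_image {V W : Type*} [DecidableEq V] [DecidableEq W] {E : Finset (Sym2 V)}
    (φ : V → W) (hφ : Function.Injective φ) (h : HasA2PDecomp E) :
    HasA2PDecomp (E.image (Sym2.map φ)) := by
  obtain ⟨k, c, c', a1, a2, a3, a4, a5, a6⟩ := h
  refine ⟨k, fun i => φ ∘ c i, fun i => φ ∘ c' i, ?_, ?_, ?_, ?_, ?_, ?_⟩
  · exact fun i => hφ.injOn.comp (a1 i) (Set.mapsTo_univ _ _)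
  · intro i j hij
    rw [cycleEdges_comp, cycleEdges_comp, Finset.disjoint_image (Sym2.map.injective hφ)]
    exact a2 i j hij
  · simp only [cycleEdges_comp]; rw [← image_sup, a3]
  · intro i
    obtain ⟨h1, h2, h3⟩ := a4 i
    refine ⟨hφ.injOn.comp h1 (Set.mapsTo_univ _ _), ?_, ?_⟩
    · rw [cycleVerts_comp, cycleVerts_comp, h2]
    · rw [cycleEdges_comp, cycleEdges_comp, Finset.disjoint_image (Sym2.map.injective hφ)]
      exact h3
  · intro i j hij
    rw [cycleEdges_comp, cycleEdges_comp, Finset.disjoint_image (Sym2.map.injective hφ)]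
    exact a5 i j hij
  · simp only [cycleEdges_comp]; rw [← image_sup, a6]

lemma sup_addCases {k1 k2 : ℕ} {β : Type*} {α : Type*} [SemilatticeSup α] [OrderBot α]
    (f1 : Fin k1 → β) (f2 : Fin k2 → β) (F : β → α) :
    (Finset.univ.sup (fun i : Fin (k1 + k2) =>
        F (Fin.addCases (motive := fun _ => β) f1 f2 i))) =
      Finset.univ.sup (fun j => F (f1 j)) ⊔ Finset.univ.sup (fun j => F (f2 j)) := by
  apply le_antisymm
  · apply Finset.sup_le
    intro i _
    refine Fin.addCases (fun j => ?_) (fun j => ?_) i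
    · simp only [Fin.addCases_left]
      exact le_sup_of_le_left (Finset.le_sup (f := fun j => F (f1 j)) (Finset.mem_univ j))
    · simp only [Fin.addCases_right]
      exact le_sup_of_le_right (Finset.le_sup (f := fun j => F (f2 j)) (Finset.mem_univ j))
  · apply sup_le
    · apply Finset.sup_le
      intro j _
      have := Finset.le_sup (f := fun i : Fin (k1 + k2) =>
        F (Fin.addCases (motive := fun _ => β) f1 f2 i)) (Finset.mem_univ (Fin.castAdd k2 j))
      simpa using this
    · apply Finset.sup_le
      intro j _
      have := Finset.le_sup (f := fun i : Fin (k1 + k2) =>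
        F (Fin.addCases (motive := fun _ => β) f1 f2 i)) (Finset.mem_univ (Fin.natAdd k1 j))
      simpa using this

lemma hasA2PDecomp_union {V : Type*} [DecidableEq V] {E1 E2 : Finset (Sym2 V)}
    (hd : Disjoint E1 E2) (h1 : HasA2PDecomp E1) (h2 : HasA2PDecomp E2) :
    HasA2PDecomp (E1 ∪ E2) := by
  obtain ⟨k1, c1, c1', a1, a2, a3, a4, a5, a6⟩ := h1
  obtain ⟨k2, c2, c2', b1, b2, b3, b4, b5, b6⟩ := h2
  have key : ∀ (d1 : Fin k1 → ℕ → V) (d2 : Fin k2 → ℕ → V),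
      Finset.univ.sup (fun i => cycleEdges 8 (d1 i)) = E1 →
      Finset.univ.sup (fun i => cycleEdges 8 (d2 i)) = E2 →
      (∀ i j, i ≠ j → Disjoint (cycleEdges 8 (d1 i)) (cycleEdges 8 (d1 j))) →
      (∀ i j, i ≠ j → Disjoint (cycleEdges 8 (d2 i)) (cycleEdges 8 (d2 j))) →
      ∀ i j : Fin (k1 + k2), i ≠ j →
        Disjoint (cycleEdges 8 (Fin.addCases (motive := fun _ => ℕ → V) d1 d2 i))
                 (cycleEdges 8 (Fin.addCases (motive := fun _ => ℕ → V) d1 d2 j)) := by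
    intro d1 d2 s1 s2 p1 p2 i j hij
    have sub1 : ∀ a, cycleEdges 8 (d1 a) ⊆ E1 := fun a => by
      rw [← s1]; exact Finset.le_sup (f := fun i => cycleEdges 8 (d1 i)) (Finset.mem_univ a)
    have sub2 : ∀ a, cycleEdges 8 (d2 a) ⊆ E2 := fun a => by
      rw [← s2]; exact Finset.le_sup (f := fun i => cycleEdges 8 (d2 i)) (Finset.mem_univ a)
    revert hij
    refine Fin.addCases (fun a => ?_) (fun a => ?_) i <;>
      refine Fin.addCases (fun b => ?_) (fun b => ?_) j <;>
      intro hij <;> simp only [Fin.addCases_left, Fin.addCases_right]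
    · exact p1 a b (fun h => hij (by rw [h]))
    · exact hd.mono (sub1 a) (sub2 b)
    · exact (hd.mono (sub1 b) (sub2 a)).symm
    · exact p2 a b (fun h => hij (by rw [h]))
  refine ⟨k1 + k2, fun i => Fin.addCases (motive := fun _ => ℕ → V) c1 c2 i,
    fun i => Fin.addCases (motive := fun _ => ℕ → V) c1' c2' i, ?_, ?_, ?_, ?_, ?_, ?_⟩
  · intro i
    refine Fin.addCases (fun j => ?_) (fun j => ?_) i
    · simpa only [Fin.addCases_left] using a1 j
    · simpa only [Fin.addCases_right] using b1 j
  · exact key c1 c2 a3 b3 a2 b2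
  · rw [sup_addCases c1 c2 (cycleEdges 8), a3, b3]; rfl
  · intro i
    refine Fin.addCases (fun j => ?_) (fun j => ?_) i
    · simpa only [Fin.addCases_left] using a4 j
    · simpa only [Fin.addCases_right] using b4 j
  · exact key c1' c2' a6 b6 a5 b5
  · rw [sup_addCases c1' c2' (cycleEdges 8), a6, b6]; rfl

lemma bipEdges_swap (r s : ℕ) :
    (bipEdges r s).image (Sym2.map Sum.swap) = bipEdges s r := by
  ext e
  simp only [bipEdges, Finset.image_image, Finset.mem_image, Finset.mem_univ, true_and,
    Prod.exists, Function.comp_def, Sym2.map_pair_eq, Sum.swap_inl, Sum.swap_inr]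
  constructor
  · rintro ⟨p, q, rfl⟩; exact ⟨q, p, Sym2.eq_swap⟩
  · rintro ⟨q, p, rfl⟩; exact ⟨p, q, Sym2.eq_swap⟩

lemma hasA2PDecomp_swap {r s : ℕ} (h : HasA2PDecomp (bipEdges r s)) :
    HasA2PDecomp (bipEdges s r) := by
  rw [← bipEdges_swap]
  exact hasA2PDecomp_image _ (Function.LeftInverse.injective Sum.swap_swap) h

lemma bipEdges_add (r a b : ℕ) :
    bipEdges r (a + b) =
      (bipEdges r a).image (Sym2.map (Sum.map id (Fin.castAdd b))) ∪
      (bipEdges r b).image (Sym2.map (Sum.map id (Fin.natAdd a))) := by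
  ext e
  simp only [bipEdges, Finset.image_image, Finset.mem_union, Finset.mem_image, Finset.mem_univ,
    true_and, Prod.exists, Function.comp_def, Sym2.map_pair_eq, Sum.map_inl, Sum.map_inr, id_eq]
  constructor
  · rintro ⟨p, q, rfl⟩
    refine Fin.addCases (fun j => ?_) (fun j => ?_) q
    · exact Or.inl ⟨p, j, rfl⟩
    · exact Or.inr ⟨p, j, rfl⟩
  · rintro (⟨p, q, rfl⟩ | ⟨p, q, rfl⟩)
    · exact ⟨p, Fin.castAdd b q, rfl⟩
    · exact ⟨p, Fin.natAdd a q, rfl⟩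

lemma bipEdges_add_disjoint (r a b : ℕ) :
    Disjoint ((bipEdges r a).image (Sym2.map (Sum.map id (Fin.castAdd b))))
             ((bipEdges r b).image (Sym2.map (Sum.map id (Fin.natAdd a)))) := by
  rw [Finset.disjoint_left]
  intro e h1 h2
  simp only [bipEdges, Finset.image_image, Finset.mem_image, Finset.mem_univ, true_and,
    Prod.exists, Function.comp_def, Sym2.map_pair_eq, Sum.map_inl, Sum.map_inr, id_eq] at h1 h2
  obtain ⟨p, q, rfl⟩ := h1
  obtain ⟨p', q', he⟩ := h2
  rw [Sym2.eq_iff] at he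
  rcases he with ⟨h, h'⟩ | ⟨h, h'⟩
  · rw [Sum.inr.injEq, Fin.ext_iff] at h'
    simp only [Fin.coe_natAdd, Fin.coe_castAdd] at h'
    omega
  · exact absurd h (by simp)

lemma hasA2PDecomp_bip_add {r a b : ℕ} (ha : HasA2PDecomp (bipEdges r a))
    (hb : HasA2PDecomp (bipEdges r b)) : HasA2PDecomp (bipEdges r (a + b)) := by
  rw [bipEdges_add]
  exact hasA2PDecomp_union (bipEdges_add_disjoint r a b)
    (hasA2PDecomp_image _ (Function.Injective.sumMap (fun _ _ h => h)
      (Fin.castAdd_injective a b)) ha)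
    (hasA2PDecomp_image _ (Function.Injective.sumMap (fun _ _ h => h)
      (fun x y h => by simp only [Fin.ext_iff, Fin.coe_natAdd] at h ⊢; omega))
      hb)


lemma isCycleMap_iff {V : Type*} (m : ℕ) (f : ℕ → V) :
    IsCycleMap m f ↔ ∀ i ∈ Finset.range m, ∀ j ∈ Finset.range m, f i = f j → i = j := Iff.rfl

-- K_{4,4} witness
def w44 : Fin 2 → ℕ → (Fin 4 ⊕ Fin 4) :=
  ![fun n => [Sum.inl 0, Sum.inr 0, Sum.inl 1, Sum.inr 1, Sum.inl 2, Sum.inr 2, Sum.inl 3, Sum.inr 3].getD n (Sum.inl 0),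
    fun n => [Sum.inl 0, Sum.inr 2, Sum.inl 1, Sum.inr 3, Sum.inl 2, Sum.inr 0, Sum.inl 3, Sum.inr 1].getD n (Sum.inl 0)]

lemma h44 : HasA2PDecomp (bipEdges 4 4) := by
  refine ⟨2, w44, ![w44 1, w44 0], ?_, ?_, ?_, ?_, ?_, ?_⟩
  · intro i; rw [isCycleMap_iff]; fin_cases i <;> decide
  · decide
  · decide
  · intro i
    refine ⟨?_, ?_, ?_⟩
    · rw [isCycleMap_iff]; fin_cases i <;> decide
    · fin_cases i <;> decide
    · fin_cases i <;> decide
  · decide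
  · decide

-- K_{4,6} witness
def w46 : Fin 3 → ℕ → (Fin 4 ⊕ Fin 6) :=
  ![fun n => [Sum.inl 0, Sum.inr 0, Sum.inl 1, Sum.inr 1, Sum.inl 2, Sum.inr 2, Sum.inl 3, Sum.inr 3].getD n (Sum.inl 0),
    fun n => [Sum.inl 0, Sum.inr 1, Sum.inl 3, Sum.inr 0, Sum.inl 2, Sum.inr 4, Sum.inl 1, Sum.inr 5].getD n (Sum.inl 0),
    fun n => [Sum.inl 0, Sum.inr 2, Sum.inl 1, Sum.inr 3, Sum.inl 2, Sum.inr 5, Sum.inl 3, Sum.inr 4].getD n (Sum.inl 0)]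

def w46' : Fin 3 → ℕ → (Fin 4 ⊕ Fin 6) :=
  ![fun n => [Sum.inl 0, Sum.inr 1, Sum.inl 3, Sum.inr 0, Sum.inl 2, Sum.inr 3, Sum.inl 1, Sum.inr 2].getD n (Sum.inl 0),
    fun n => [Sum.inl 0, Sum.inr 0, Sum.inl 1, Sum.inr 1, Sum.inl 2, Sum.inr 5, Sum.inl 3, Sum.inr 4].getD n (Sum.inl 0),
    fun n => [Sum.inl 0, Sum.inr 3, Sum.inl 3, Sum.inr 2, Sum.inl 2, Sum.inr 4, Sum.inl 1, Sum.inr 5].getD n (Sum.inl 0)]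

lemma h46 : HasA2PDecomp (bipEdges 4 6) := by
  refine ⟨3, w46, w46', ?_, ?_, ?_, ?_, ?_, ?_⟩
  · intro i; rw [isCycleMap_iff]; fin_cases i <;> decide
  · decide
  · decide
  · intro i
    refine ⟨?_, ?_, ?_⟩
    · rw [isCycleMap_iff]; fin_cases i <;> decide
    · fin_cases i <;> decide
    · fin_cases i <;> decide
  · decide
  · decide

/-- `K_{4t,4s+2}` has an almost 2-perfect 8-cycle decomposition. -/
theorem a2p_K4t4s2 (t s : ℕ) (ht : 0 < t) (hs : 0 < s) :
    HasA2PDecomp (bipEdges (4 * t) (4 * s + 2)) := by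
  obtain ⟨t', rfl⟩ : ∃ t', t = t' + 1 := ⟨t - 1, by omega⟩
  obtain ⟨s', rfl⟩ : ∃ s', s = s' + 1 := ⟨s - 1, by omega⟩
  have right6 : ∀ n, HasA2PDecomp (bipEdges 4 (6 + 4 * n)) := by
    intro n
    induction n with
    | zero => rw [show 6 + 4 * 0 = 6 by norm_num]; exact h46
    | succ m ih =>
        rw [show 6 + 4 * (m + 1) = (6 + 4 * m) + 4 by ring]
        exact hasA2PDecomp_bip_add ih h44
  have left : ∀ m, HasA2PDecomp (bipEdges (6 + 4 * s') (4 * (m + 1))) := by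
    intro m
    induction m with
    | zero => rw [show 4 * (0 + 1) = 4 by norm_num]; exact hasA2PDecomp_swap (right6 s')
    | succ m ih =>
        rw [show 4 * (m + 1 + 1) = 4 * (m + 1) + 4 by ring]
        exact hasA2PDecomp_bip_add ih (hasA2PDecomp_swap (right6 s'))
  have h := hasA2PDecomp_swap (left t')
  rwa [show 4 * (s' + 1) + 2 = 6 + 4 * s' by ring]
end

section
/- If there exist an almost 2-perfect maximum 8-cycle packing of K_r with leave L_r and an almost 2-perfect 8-cycle decomposition of K_{r,s}, then there exists an almost 2-perfect 8-cycle packing of the graph K_{r+s} \ K_s (complete graph on r+s vertices minus the edges inside a fixed s-subset) with leave L_r. -/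
open Finset

section Aux

open Finset

lemma sup_finSumFinEquiv {α} [DecidableEq α] {k1 k2 : ℕ} (f : Fin k1 ⊕ Fin k2 → Finset α) :
    Finset.univ.sup (fun i : Fin (k1+k2) => f (finSumFinEquiv.symm i)) =
    Finset.univ.sup (fun i : Fin k1 => f (.inl i)) ∪
      Finset.univ.sup (fun i : Fin k2 => f (.inr i)) := by
  have h1 : (Finset.univ.sup fun i : Fin (k1+k2) => f (finSumFinEquiv.symm i))
      = (Finset.univ.image finSumFinEquiv.symm).sup f := by
    rw [Finset.sup_image]; rfl
  have h2 : (Finset.univ : Finset (Fin k1 ⊕ Fin k2)) =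
      Finset.univ.map Function.Embedding.inl ∪ Finset.univ.map Function.Embedding.inr := by
    ext x; cases x <;> simp
  rw [h1, Finset.image_univ_equiv, h2, Finset.sup_union, Finset.sup_map, Finset.sup_map]
  rfl

lemma combine_packing_decomp {V : Type*} [DecidableEq V] (E1 E2 L : Finset (Sym2 V))
    (hd : Disjoint E1 E2) (h1 : HasA2PPacking E1 L) (h2 : HasA2PDecomp E2) :
    HasA2PPacking (E1 ∪ E2) L := by
  obtain ⟨hL, k1, c1, c1', hc1cyc, hc1dis, hc1sup, hc1in, hc1'dis, hc1'sup⟩ := h1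
  obtain ⟨k2, c2, c2', hc2cyc, hc2dis, hc2sup, hc2in, hc2'dis, hc2'sup⟩ := h2
  have hdL : Disjoint E2 L := (hd.symm.mono_right hL)
  have hsd : (E1 ∪ E2) \ L = (E1 \ L) ∪ E2 := by
    rw [Finset.union_sdiff_distrib, Finset.sdiff_eq_self_of_disjoint hdL]
  refine ⟨hL.trans Finset.subset_union_left, k1 + k2,
    (fun i => Sum.elim c1 c2 (finSumFinEquiv.symm i)),
    (fun i => Sum.elim c1' c2' (finSumFinEquiv.symm i)), ?_, ?_, ?_, ?_, ?_, ?_⟩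
  · intro i; cases h : finSumFinEquiv.symm i with
    | inl a => simp only [h, Sum.elim_inl]; exact hc1cyc a
    | inr b => simp only [h, Sum.elim_inr]; exact hc2cyc b
  · intro i j hij
    have hij' : finSumFinEquiv.symm i ≠ finSumFinEquiv.symm j := fun h => hij (by
      simpa using congrArg finSumFinEquiv h)
    cases hi : finSumFinEquiv.symm i with
    | inl a => cases hj : finSumFinEquiv.symm j with
      | inl a' =>
        simp only [hi, hj, Sum.elim_inl]
        exact hc1dis a a' (by rintro rfl; exact hij' (hi.trans hj.symm))
      | inr b' =>
        simp only [hi, hj, Sum.elim_inl, Sum.elim_inr]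
        refine hd.mono ?_ ?_
        · exact (Finset.le_sup (f := fun i => cycleEdges 8 (c1 i)) (Finset.mem_univ a)).trans
            (by rw [hc1sup]; exact Finset.sdiff_subset)
        · exact (Finset.le_sup (f := fun i => cycleEdges 8 (c2 i)) (Finset.mem_univ b')).trans
            (le_of_eq hc2sup)
    | inr b => cases hj : finSumFinEquiv.symm j with
      | inl a' =>
        simp only [hi, hj, Sum.elim_inl, Sum.elim_inr]
        refine hd.symm.mono ?_ ?_
        · exact (Finset.le_sup (f := fun i => cycleEdges 8 (c2 i)) (Finset.mem_univ b)).trans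
            (le_of_eq hc2sup)
        · exact (Finset.le_sup (f := fun i => cycleEdges 8 (c1 i)) (Finset.mem_univ a')).trans
            (by rw [hc1sup]; exact Finset.sdiff_subset)
      | inr b' =>
        simp only [hi, hj, Sum.elim_inr]
        exact hc2dis b b' (by rintro rfl; exact hij' (hi.trans hj.symm))
  · rw [hsd, ← hc1sup, ← hc2sup]
    exact sup_finSumFinEquiv (fun x => cycleEdges 8 (Sum.elim c1 c2 x))
  · intro i; cases h : finSumFinEquiv.symm i with
    | inl a => simp only [h, Sum.elim_inl]; exact hc1in a
    | inr b => simp only [h, Sum.elim_inr]; exact hc2in b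
  · intro i j hij
    have hij' : finSumFinEquiv.symm i ≠ finSumFinEquiv.symm j := fun h => hij (by
      simpa using congrArg finSumFinEquiv h)
    cases hi : finSumFinEquiv.symm i with
    | inl a => cases hj : finSumFinEquiv.symm j with
      | inl a' =>
        simp only [hi, hj, Sum.elim_inl]
        exact hc1'dis a a' (by rintro rfl; exact hij' (hi.trans hj.symm))
      | inr b' =>
        simp only [hi, hj, Sum.elim_inl, Sum.elim_inr]
        refine hd.mono ?_ ?_
        · exact (Finset.le_sup (f := fun i => cycleEdges 8 (c1' i)) (Finset.mem_univ a)).trans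
            (by rw [hc1'sup]; exact Finset.sdiff_subset)
        · exact (Finset.le_sup (f := fun i => cycleEdges 8 (c2' i)) (Finset.mem_univ b')).trans
            (le_of_eq hc2'sup)
    | inr b => cases hj : finSumFinEquiv.symm j with
      | inl a' =>
        simp only [hi, hj, Sum.elim_inl, Sum.elim_inr]
        refine hd.symm.mono ?_ ?_
        · exact (Finset.le_sup (f := fun i => cycleEdges 8 (c2' i)) (Finset.mem_univ b)).trans
            (le_of_eq hc2'sup)
        · exact (Finset.le_sup (f := fun i => cycleEdges 8 (c1' i)) (Finset.mem_univ a')).trans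
            (by rw [hc1'sup]; exact Finset.sdiff_subset)
      | inr b' =>
        simp only [hi, hj, Sum.elim_inr]
        exact hc2'dis b b' (by rintro rfl; exact hij' (hi.trans hj.symm))
  · rw [hsd, ← hc1'sup, ← hc2'sup]
    exact sup_finSumFinEquiv (fun x => cycleEdges 8 (Sum.elim c1' c2' x))

end Aux

/-- From an A2P maximum packing of `K_r` with leave `Lr` and an A2P decomposition of
`K_{r,s}`, one gets an A2P packing of `K_{r+s} \ K_s` with leave `Lr`. -/
theorem a2p_biparhole (r s : ℕ) (Lr : Finset (Sym2 (Fin (r + s))))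
    (hLr : Lr ⊆ ((Finset.univ.filter (fun v : Fin (r + s) => v.val < r)).sym2.filter
      (fun e => ¬ e.IsDiag)))
    (h1 : HasA2PPacking ((Finset.univ.filter (fun v : Fin (r + s) => v.val < r)).sym2.filter
      (fun e => ¬ e.IsDiag)) Lr)
    (h2 : HasA2PDecomp (((Finset.univ.filter (fun v : Fin (r + s) => v.val < r)) ×ˢ
      (Finset.univ.filter (fun v : Fin (r + s) => r ≤ v.val))).image
        (fun p => s(p.1, p.2)))) :
    HasA2PPacking ((kEdges (Fin (r + s))) \
      ((Finset.univ.filter (fun v : Fin (r + s) => r ≤ v.val)).sym2)) Lr := by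
  
  set E1 := ((Finset.univ.filter (fun v : Fin (r + s) => v.val < r)).sym2.filter
      (fun e => ¬ e.IsDiag)) with hE1
  set E2 := (((Finset.univ.filter (fun v : Fin (r + s) => v.val < r)) ×ˢ
      (Finset.univ.filter (fun v : Fin (r + s) => r ≤ v.val))).image
        (fun p => s(p.1, p.2))) with hE2
  have heq : ((kEdges (Fin (r + s))) \
      ((Finset.univ.filter (fun v : Fin (r + s) => r ≤ v.val)).sym2)) = E1 ∪ E2 := by
    ext e
    induction e using Sym2.ind with
    | _ x y =>
      simp only [hE1, hE2, kEdges, Finset.mem_sdiff, Finset.mem_filter, Finset.mem_univ,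
        true_and, Finset.mk_mem_sym2_iff, Finset.mem_union, Finset.mem_image,
        Finset.mem_product, Prod.exists, Sym2.isDiag_iff_proj_eq, Sym2.eq_iff]
      constructor
      · rintro ⟨hxy, h⟩
        push_neg at h
        rcases lt_or_ge x.val r with hx | hx
        · rcases lt_or_ge y.val r with hy | hy
          · exact Or.inl ⟨⟨hx, hy⟩, hxy⟩
          · exact Or.inr ⟨x, y, ⟨⟨hx, hy⟩, Or.inl ⟨rfl, rfl⟩⟩⟩
        · rcases lt_or_ge y.val r with hy | hy
          · exact Or.inr ⟨y, x, ⟨⟨hy, hx⟩, Or.inr ⟨rfl, rfl⟩⟩⟩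
          · exact absurd (h hx) (by omega)
      · rintro (⟨⟨hx, hy⟩, hxy⟩ | ⟨a, b, ⟨⟨ha, hb⟩, (⟨rfl, rfl⟩ | ⟨rfl, rfl⟩)⟩⟩)
        · exact ⟨hxy, fun h => absurd hx (by omega)⟩
        · exact ⟨by rintro rfl; omega, fun h => by omega⟩
        · exact ⟨by rintro rfl; omega, fun h => by omega⟩
  have hdisj : Disjoint E1 E2 := by
    rw [Finset.disjoint_left]
    intro e he1 he2
    induction e using Sym2.ind with
    | _ x y =>
      simp only [hE1, hE2, Finset.mem_filter, Finset.mk_mem_sym2_iff, Finset.mem_univ,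
        true_and, Finset.mem_image, Finset.mem_product, Prod.exists, Sym2.eq_iff] at he1 he2
      obtain ⟨⟨hx, hy⟩, -⟩ := he1
      obtain ⟨a, b, ⟨⟨-, hb⟩, (⟨rfl, rfl⟩ | ⟨rfl, rfl⟩)⟩⟩ := he2 <;> omega
  rw [heq]
  exact combine_packing_decomp E1 E2 Lr hdisj h1 h2
end
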